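/- Let f : ℝ^d → ℝ be μ-strongly convex (μ > 0), let g_1, …, g_q : ℝ^d → ℝ be convex functions such that every subgradient of every g_l at every point has Euclidean norm at most L_g, and let A ∈ ℝ^{p×d}. Suppose x minimizes over ℝ^d the function x ↦ f(x) + ⟨u, A x⟩ + Σ_{l=1}^q y_l g_l(x) with y = (y_1,…,y_q) ∈ ℝ^q_{≥0}, and x' minimizes the corresponding function with multipliers (u', y'), y' ∈ ℝ^q_{≥0}. Then ‖x − x'‖ ≤ (√(‖A‖² + q L_g²)/μ) · ‖(u − u', y − y')‖, where ‖A‖ denotes the operator (spectral) norm of A and the norm on the right is the Euclidean norm of the concatenated vector in ℝ^{p+q}. -/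

import Mathlib

open RealInnerProductSpace Finset

/-- A vector `s` is a subgradient of `g` at `x` if `g y ≥ g x + ⟪s, y - x⟫` for all `y`. -/
def IsSubgradientAt {E : Type*} [NormedAddCommGroup E] [InnerProductSpace ℝ E]
    (g : E → ℝ) (s : E) (x : E) : Prop :=
  ∀ y, g y ≥ g x + ⟪s, y - x⟫

/-- Every real-valued convex function on a Euclidean space has a subgradient at every point. -/
lemma exists_subgradient {d : ℕ} (g : EuclideanSpace ℝ (Fin d) → ℝ)
    (hg : ConvexOn ℝ Set.univ g) (x₀ : EuclideanSpace ℝ (Fin d)) :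
    ∃ s, IsSubgradientAt g s x₀ := by
  have hcont : Continuous g := by
    have := hg.continuousOn isOpen_univ
    rwa [continuousOn_univ] at this
  set U : Set (EuclideanSpace ℝ (Fin d) × ℝ) := {p | g p.1 < p.2} with hU
  have hUconv : Convex ℝ U := by
    have := hg.convex_strict_epigraph
    simpa [hU] using this
  have hUopen : IsOpen U := isOpen_lt (hcont.comp continuous_fst) continuous_snd
  have hx₀ : (x₀, g x₀) ∉ U := by simp [hU]
  obtain ⟨φ, hφ⟩ := geometric_hahn_banach_open_point hUconv hUopen hx₀
  set a : ℝ := φ ((0 : EuclideanSpace ℝ (Fin d)), (1 : ℝ)) with ha_def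
  have hφsplit : ∀ (w : EuclideanSpace ℝ (Fin d)) (t : ℝ), φ (w, t) = φ (w, 0) + t * a := by
    intro w t
    have h1 : ((w, t) : EuclideanSpace ℝ (Fin d) × ℝ)
        = (w, (0:ℝ)) + t • ((0 : EuclideanSpace ℝ (Fin d)), (1:ℝ)) := by
      simp [Prod.ext_iff]
    rw [h1, map_add, map_smul, smul_eq_mul]
  have ha : a < 0 := by
    have hmem : ((x₀, g x₀ + 1) : EuclideanSpace ℝ (Fin d) × ℝ) ∈ U := by simp [hU]
    have h1 := hφ _ hmem
    have e1 := hφsplit x₀ (g x₀ + 1)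
    have e2 := hφsplit x₀ (g x₀)
    linarith
  have key : ∀ w : EuclideanSpace ℝ (Fin d),
      φ (w, 0) + g w * a ≤ φ (x₀, 0) + g x₀ * a := by
    intro w
    by_contra h
    push_neg at h
    set δ := (φ (w, 0) + g w * a) - (φ (x₀, 0) + g x₀ * a) with hδ
    have hδpos : 0 < δ := by linarith
    have hε : (0:ℝ) < δ / (-a) := div_pos hδpos (by linarith)
    have hmem : ((w, g w + δ / (-a)) : EuclideanSpace ℝ (Fin d) × ℝ) ∈ U := by
      simp [hU]; linarith
    have h2 := hφ _ hmem
    have e1 := hφsplit w (g w + δ / (-a))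
    have e2 := hφsplit x₀ (g x₀)
    have hne : (-a) ≠ 0 := by intro hc; rw [neg_eq_zero] at hc; linarith
    have h3 : δ / (-a) * a = -δ := by
      field_simp
      rw [div_self ha.ne]
    nlinarith
  refine ⟨(InnerProductSpace.toDual ℝ (EuclideanSpace ℝ (Fin d))).symm
    ((-a)⁻¹ • (φ.comp (ContinuousLinearMap.inl ℝ (EuclideanSpace ℝ (Fin d)) ℝ))), ?_⟩
  intro z
  have hinner : ⟪(InnerProductSpace.toDual ℝ (EuclideanSpace ℝ (Fin d))).symm
      ((-a)⁻¹ • (φ.comp (ContinuousLinearMap.inl ℝ (EuclideanSpace ℝ (Fin d)) ℝ))), z - x₀⟫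
      = (-a)⁻¹ * (φ (z, 0) - φ (x₀, 0)) := by
    rw [InnerProductSpace.toDual_symm_apply]
    have h4 : ((z - x₀, (0:ℝ)) : EuclideanSpace ℝ (Fin d) × ℝ) = (z, 0) - (x₀, 0) := by
      simp [Prod.ext_iff]
    simp [ContinuousLinearMap.smul_apply, ContinuousLinearMap.comp_apply,
      ContinuousLinearMap.inl_apply, h4, map_sub, mul_sub]
  rw [ge_iff_le, hinner]
  have hz := key z
  have h2 : (-a)⁻¹ * (φ (z, 0) - φ (x₀, 0)) ≤ g z - g x₀ := by
    rw [inv_mul_le_iff₀ (by linarith : (0:ℝ) < -a)]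
    nlinarith
  linarith

/-- Quadratic growth at a minimizer of a strongly convex function. -/
lemma growth_of_min {d : ℕ} {μ : ℝ} (hμ : 0 < μ) (F : EuclideanSpace ℝ (Fin d) → ℝ)
    (hF : ConvexOn ℝ Set.univ (fun w => F w - μ / 2 * ‖w‖ ^ 2))
    (x : EuclideanSpace ℝ (Fin d)) (hx : ∀ w, F x ≤ F w) :
    ∀ w, F x + μ / 2 * ‖w - x‖ ^ 2 ≤ F w := by
  intro w
  have key : ∀ t : ℝ, t ∈ Set.Ioo (0:ℝ) 1 → μ/2 * (1-t) * ‖w-x‖^2 ≤ F w - F x := by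
    intro t ht
    have h2 := hF.2 (Set.mem_univ w) (Set.mem_univ x) (le_of_lt ht.1)
      (by linarith [ht.2] : (0:ℝ) ≤ 1 - t) (by ring)
    simp only [smul_eq_mul] at h2
    have hmin := hx (t • w + (1-t) • x)
    have hid : ‖t • w + (1-t) • x‖^2 = t*‖w‖^2 + (1-t)*‖x‖^2 - t*(1-t)*‖w-x‖^2 := by
      have h1 : ‖t • w + (1-t) • x‖^2
          = t^2*‖w‖^2 + 2*(t*(1-t))*⟪w,x⟫ + (1-t)^2*‖x‖^2 := by
        rw [norm_add_sq_real, norm_smul, norm_smul, real_inner_smul_left,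
          real_inner_smul_right]
        rw [Real.norm_eq_abs, Real.norm_eq_abs, abs_of_nonneg (le_of_lt ht.1),
          abs_of_nonneg (by linarith [ht.2] : (0:ℝ) ≤ 1 - t)]
        ring
      have h2' : ‖w - x‖^2 = ‖w‖^2 - 2*⟪w,x⟫ + ‖x‖^2 := by
        rw [norm_sub_sq_real]
      rw [h1, h2']; ring
    have hpre : t * (μ/2*(1-t)*‖w-x‖^2) ≤ t * (F w - F x) := by nlinarith
    exact le_of_mul_le_mul_left hpre ht.1
  have hten : Filter.Tendsto (fun t : ℝ => μ/2*(1-t)*‖w-x‖^2) (nhdsWithin 0 (Set.Ioi 0))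
      (nhds (μ/2*(1-0)*‖w-x‖^2)) := by
    apply Filter.Tendsto.mono_left _ nhdsWithin_le_nhds
    exact Continuous.tendsto (by continuity) 0
  have hev : ∀ᶠ t in nhdsWithin (0:ℝ) (Set.Ioi 0), μ/2*(1-t)*‖w-x‖^2 ≤ F w - F x := by
    filter_upwards [Ioo_mem_nhdsGT_of_mem (Set.mem_Ico.mpr ⟨le_refl (0:ℝ), zero_lt_one⟩)]
      with t ht using key t ht
  have := le_of_tendsto hten hev
  simp only [sub_zero] at this
  nlinarith [this]

/-- Convexity of the shifted Lagrangian. -/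
lemma lagr_convex {d p q : ℕ} (μ : ℝ) (f : EuclideanSpace ℝ (Fin d) → ℝ)
    (hf : ConvexOn ℝ Set.univ (fun x => f x - μ / 2 * ‖x‖ ^ 2))
    (g : Fin q → EuclideanSpace ℝ (Fin d) → ℝ)
    (hg : ∀ l, ConvexOn ℝ Set.univ (g l))
    (A : EuclideanSpace ℝ (Fin d) →L[ℝ] EuclideanSpace ℝ (Fin p))
    (u : EuclideanSpace ℝ (Fin p)) (y : EuclideanSpace ℝ (Fin q)) (hy : ∀ l, 0 ≤ y l) :
    ConvexOn ℝ Set.univ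
      (fun w => (f w + ⟪u, A w⟫ + ∑ l, y l * g l w) - μ / 2 * ‖w‖ ^ 2) := by
  have hlin : ConvexOn ℝ Set.univ (fun w : EuclideanSpace ℝ (Fin d) => ⟪u, A w⟫) := by
    refine ⟨convex_univ, fun w _ v _ a b ha hb hab => le_of_eq ?_⟩
    simp only [smul_eq_mul]
    rw [map_add, map_smul, map_smul, inner_add_right, real_inner_smul_right,
      real_inner_smul_right]
  have hsum : ∀ t : Finset (Fin q),
      ConvexOn ℝ Set.univ (fun w => ∑ l ∈ t, y l * g l w) := by
    intro t
    induction t using Finset.induction_on with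
    | empty => simpa using convexOn_const (0:ℝ) convex_univ
    | @insert a t ha ih =>
      have h1 : ConvexOn ℝ Set.univ (fun w => y a * g a w) := by
        simpa [smul_eq_mul] using (hg a).smul (hy a)
      have := h1.add ih
      simp only [Finset.sum_insert ha]
      exact this
  have heq : (fun w : EuclideanSpace ℝ (Fin d) =>
        (f w + ⟪u, A w⟫ + ∑ l, y l * g l w) - μ / 2 * ‖w‖ ^ 2)
      = fun w => (f w - μ / 2 * ‖w‖ ^ 2) + (⟪u, A w⟫ + ∑ l, y l * g l w) := by
    funext w; ring
  rw [heq]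
  exact hf.add (hlin.add (hsum Finset.univ))

set_option maxHeartbeats 1000000 in
/-- If `f` is `μ`-strongly convex, each `g l` is convex with all subgradients
bounded in norm by `Lg`, `x` minimizes `f + ⟪u, A ·⟫ + ∑ l, y l • g l` and `x'` minimizes the
corresponding function with multipliers `(u', y')` (both `y, y' ≥ 0`), then
`‖x − x'‖ ≤ (√(‖A‖² + q Lg²)/μ) ‖(u − u', y − y')‖`. -/
theorem strongly_convex_lagrangian_minimizer_lipschitz
    (d p q : ℕ) (μ Lg : ℝ) (hμ : 0 < μ)
    (f : EuclideanSpace ℝ (Fin d) → ℝ)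
    (hf : ConvexOn ℝ Set.univ (fun x => f x - μ / 2 * ‖x‖ ^ 2))
    (g : Fin q → EuclideanSpace ℝ (Fin d) → ℝ)
    (hg : ∀ l, ConvexOn ℝ Set.univ (g l))
    (hsub : ∀ l (x s : EuclideanSpace ℝ (Fin d)), IsSubgradientAt (g l) s x → ‖s‖ ≤ Lg)
    (A : EuclideanSpace ℝ (Fin d) →L[ℝ] EuclideanSpace ℝ (Fin p))
    (u u' : EuclideanSpace ℝ (Fin p))
    (y y' : EuclideanSpace ℝ (Fin q))
    (hy : ∀ l, 0 ≤ y l) (hy' : ∀ l, 0 ≤ y' l)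
    (x x' : EuclideanSpace ℝ (Fin d))
    (hx : ∀ w, f x + ⟪u, A x⟫ + ∑ l, y l * g l x ≤ f w + ⟪u, A w⟫ + ∑ l, y l * g l w)
    (hx' : ∀ w, f x' + ⟪u', A x'⟫ + ∑ l, y' l * g l x'
      ≤ f w + ⟪u', A w⟫ + ∑ l, y' l * g l w) :
    ‖x - x'‖ ≤ Real.sqrt (‖A‖ ^ 2 + q * Lg ^ 2) / μ *
      Real.sqrt (‖u - u'‖ ^ 2 + ‖y - y'‖ ^ 2) := by
  -- quadratic growth at the two minimizers
  have h1 := growth_of_min hμ _ (lagr_convex μ f hf g hg A u y hy) x hx x'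
  have h2 := growth_of_min hμ _ (lagr_convex μ f hf g hg A u' y' hy') x' hx' x
  rw [norm_sub_rev x'] at h1
  -- Lipschitz bound on each g l
  have hlip : ∀ l, |g l x' - g l x| ≤ Lg * ‖x - x'‖ := by
    intro l
    obtain ⟨s1, hs1⟩ := exists_subgradient (g l) (hg l) x
    obtain ⟨s2, hs2⟩ := exists_subgradient (g l) (hg l) x'
    have hb1 := hsub l x s1 hs1
    have hb2 := hsub l x' s2 hs2
    have e1 := hs1 x'
    have e2 := hs2 x
    have c1 : |⟪s1, x' - x⟫| ≤ Lg * ‖x - x'‖ := by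
      calc |⟪s1, x' - x⟫| ≤ ‖s1‖ * ‖x' - x‖ := abs_real_inner_le_norm _ _
        _ ≤ Lg * ‖x - x'‖ := by
            rw [norm_sub_rev]
            exact mul_le_mul_of_nonneg_right hb1 (norm_nonneg _)
    have c2 : |⟪s2, x - x'⟫| ≤ Lg * ‖x - x'‖ := by
      calc |⟪s2, x - x'⟫| ≤ ‖s2‖ * ‖x - x'‖ := abs_real_inner_le_norm _ _
        _ ≤ Lg * ‖x - x'‖ := mul_le_mul_of_nonneg_right hb2 (norm_nonneg _)
    rw [abs_sub_le_iff]
    constructor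
    · have := neg_abs_le ⟪s2, x - x'⟫
      linarith
    · have := neg_abs_le ⟪s1, x' - x⟫
      linarith
  -- sum of absolute values vs Euclidean norm
  have hynorm : ‖y - y'‖ = Real.sqrt (∑ l, (y l - y' l)^2) := by
    rw [EuclideanSpace.norm_eq]
    congr 1
    refine Finset.sum_congr rfl fun l _ => ?_
    have : (y - y') l = y l - y' l := rfl
    rw [this, Real.norm_eq_abs, sq_abs]
  have hsumabs : ∑ l, |y l - y' l| ≤ Real.sqrt q * ‖y - y'‖ := by
    have hcs : (∑ l, |y l - y' l|)^2 ≤ (q : ℝ) * ∑ l, (y l - y' l)^2 := by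
      have := sq_sum_le_card_mul_sum_sq (s := (Finset.univ : Finset (Fin q)))
        (f := fun l => |y l - y' l|)
      simpa [sq_abs] using this
    calc ∑ l, |y l - y' l| = Real.sqrt ((∑ l, |y l - y' l|)^2) := by
          rw [Real.sqrt_sq (Finset.sum_nonneg fun l _ => abs_nonneg _)]
      _ ≤ Real.sqrt ((q : ℝ) * ∑ l, (y l - y' l)^2) := Real.sqrt_le_sqrt hcs
      _ = Real.sqrt q * ‖y - y'‖ := by
          rw [Real.sqrt_mul (Nat.cast_nonneg q), hynorm]
  -- the difference of Lagrangians
  have hD : (f x' + ⟪u, A x'⟫ + ∑ l, y l * g l x') - (f x + ⟪u, A x⟫ + ∑ l, y l * g l x)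
      + ((f x + ⟪u', A x⟫ + ∑ l, y' l * g l x)
        - (f x' + ⟪u', A x'⟫ + ∑ l, y' l * g l x'))
      = ⟪u - u', A x' - A x⟫ + ∑ l, (y l - y' l) * (g l x' - g l x) := by
    rw [inner_sub_left, inner_sub_right, inner_sub_right]
    simp only [sub_mul, mul_sub, Finset.sum_sub_distrib]
    ring
  -- bound on the inner product term
  have hA : ⟪u - u', A x' - A x⟫ ≤ ‖u - u'‖ * (‖A‖ * ‖x - x'‖) := by
    calc ⟪u - u', A x' - A x⟫ ≤ ‖u - u'‖ * ‖A x' - A x‖ := real_inner_le_norm _ _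
      _ = ‖u - u'‖ * ‖A (x' - x)‖ := by rw [map_sub]
      _ ≤ ‖u - u'‖ * (‖A‖ * ‖x' - x‖) :=
          mul_le_mul_of_nonneg_left (A.le_opNorm _) (norm_nonneg _)
      _ = ‖u - u'‖ * (‖A‖ * ‖x - x'‖) := by rw [norm_sub_rev x' x]
  -- bound on the sum term
  have hS : ∑ l, (y l - y' l) * (g l x' - g l x)
      ≤ (Real.sqrt q * ‖y - y'‖) * (Lg * ‖x - x'‖) := by
    rcases Nat.eq_zero_or_pos q with hq0 | hqpos
    · subst hq0
      simp
    · have hLg : 0 ≤ Lg := by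
        obtain ⟨s0, hs0⟩ := exists_subgradient (g ⟨0, hqpos⟩) (hg _) x
        exact le_trans (norm_nonneg s0) (hsub _ x s0 hs0)
      calc ∑ l, (y l - y' l) * (g l x' - g l x)
          ≤ ∑ l, |y l - y' l| * (Lg * ‖x - x'‖) := by
            refine Finset.sum_le_sum fun l _ => ?_
            calc (y l - y' l) * (g l x' - g l x)
                ≤ |(y l - y' l) * (g l x' - g l x)| := le_abs_self _
              _ = |y l - y' l| * |g l x' - g l x| := abs_mul _ _
              _ ≤ |y l - y' l| * (Lg * ‖x - x'‖) :=
                  mul_le_mul_of_nonneg_left (hlip l) (abs_nonneg _)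
        _ = (∑ l, |y l - y' l|) * (Lg * ‖x - x'‖) := (Finset.sum_mul _ _ _).symm
        _ ≤ (Real.sqrt q * ‖y - y'‖) * (Lg * ‖x - x'‖) :=
            mul_le_mul_of_nonneg_right hsumabs (by positivity)
  -- central inequality
  have hkey : μ * ‖x - x'‖^2
      ≤ (‖A‖ * ‖u - u'‖ + Real.sqrt q * Lg * ‖y - y'‖) * ‖x - x'‖ := by
    nlinarith [h1, h2, hD, hA, hS]
  -- Cauchy–Schwarz in ℝ²
  have hq2 : Real.sqrt q ^ 2 = (q : ℝ) := Real.sq_sqrt (Nat.cast_nonneg q)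
  have hCS : ‖A‖ * ‖u - u'‖ + Real.sqrt q * Lg * ‖y - y'‖
      ≤ Real.sqrt (‖A‖ ^ 2 + q * Lg ^ 2) * Real.sqrt (‖u - u'‖ ^ 2 + ‖y - y'‖ ^ 2) := by
    have hsq : (‖A‖ * ‖u - u'‖ + Real.sqrt q * Lg * ‖y - y'‖)^2
        ≤ (‖A‖ ^ 2 + q * Lg ^ 2) * (‖u - u'‖ ^ 2 + ‖y - y'‖ ^ 2) := by
      conv_rhs => rw [← hq2]
      nlinarith [sq_nonneg (‖A‖ * ‖y - y'‖ - Real.sqrt q * Lg * ‖u - u'‖)]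
    calc ‖A‖ * ‖u - u'‖ + Real.sqrt q * Lg * ‖y - y'‖
        ≤ |‖A‖ * ‖u - u'‖ + Real.sqrt q * Lg * ‖y - y'‖| := le_abs_self _
      _ = Real.sqrt ((‖A‖ * ‖u - u'‖ + Real.sqrt q * Lg * ‖y - y'‖)^2) :=
          (Real.sqrt_sq_eq_abs _).symm
      _ ≤ Real.sqrt ((‖A‖ ^ 2 + q * Lg ^ 2) * (‖u - u'‖ ^ 2 + ‖y - y'‖ ^ 2)) :=
          Real.sqrt_le_sqrt hsq
      _ = Real.sqrt (‖A‖ ^ 2 + q * Lg ^ 2) * Real.sqrt (‖u - u'‖ ^ 2 + ‖y - y'‖ ^ 2) :=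
          Real.sqrt_mul (by positivity) _
  -- conclude
  rcases eq_or_lt_of_le (norm_nonneg (x - x')) with h0 | h0
  · rw [← h0]
    positivity
  · have hfin : μ * ‖x - x'‖
        ≤ Real.sqrt (‖A‖ ^ 2 + q * Lg ^ 2) * Real.sqrt (‖u - u'‖ ^ 2 + ‖y - y'‖ ^ 2) := by
      nlinarith [hkey, hCS, h0]
    rw [div_mul_eq_mul_div, le_div_iff₀ hμ]
    linarith
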